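/- If G is a generating set of the monoid S, then for every building block x of S, the set S⁻¹·x·S⁻¹ has nonempty intersection with G. -/

import Mathlib

theorem generating_set_meets_building_blocks {M : Type*} [Monoid M] (G : Set M)
    (hG : ∀ s : M, ∃ l : List M, l ≠ [] ∧ (∀ g ∈ l, g ∈ G) ∧ l.prod = s)
    (x : M)
    (hx : ∀ y z : M, x = y * z →
      (∃ u : Mˣ, y = x * (u : M)) ∨ (∃ u : Mˣ, z = (u : M) * x)) :
    ∃ g ∈ G, ∃ u v : Mˣ, g = (u : M) * x * (v : M) := by
  have key : ∀ l : List M, l ≠ [] → ∀ u : Mˣ, l.prod = (u : M) * x →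
      ∃ g ∈ l, ∃ a b : Mˣ, g = (a : M) * x * (b : M) := by
    intro l
    induction l with
    | nil => intro h; exact absurd rfl h
    | cons a t ih =>
      intro _ u hprod
      rcases t.eq_nil_or_concat with ht | ht
      · subst ht
        simp only [List.prod_cons, List.prod_nil, mul_one] at hprod
        exact ⟨a, List.mem_cons_self, u, 1, by simp [hprod]⟩
      · have htne : t ≠ [] := by rcases ht with ⟨_, _, rfl⟩; simp
        simp only [List.prod_cons] at hprod
        have hx' : x = ((u⁻¹ : Mˣ) : M) * a * t.prod := by
          rw [mul_assoc, hprod, ← mul_assoc, Units.inv_mul, one_mul]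
        rcases hx _ _ hx' with ⟨v, hv⟩ | ⟨v, hv⟩
        · refine ⟨a, List.mem_cons_self, u, v, ?_⟩
          have : (u : M) * (((u⁻¹ : Mˣ) : M) * a) = (u : M) * (x * v) := by rw [hv]
          rwa [← mul_assoc, Units.mul_inv, one_mul, ← mul_assoc] at this
        · obtain ⟨g, hg, hab⟩ := ih htne v hv
          exact ⟨g, List.mem_cons_of_mem a hg, hab⟩
  obtain ⟨l, hne, hmem, hprod⟩ := hG x
  obtain ⟨g, hg, a, b, hgab⟩ := key l hne 1 (by simpa using hprod)
  exact ⟨g, hmem g hg, a, b, hgab⟩
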